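/- There exists a constant c > 0 such that for every z with Im z > 1 and every γ ∈ ℂ with |γ| = 1 one has |γ + Θ(z)| ≥ 1 − |Θ(z)| ≥ c·Im z / (|z|² + 1). -/

import Mathlib

open Complex Metric Set

noncomputable section

lemma normSq_sub_eq' (a u : ℂ) :
    Complex.normSq (u - a) =
      Complex.normSq u + Complex.normSq a - 2 * ((starRingEnd ℂ) a * u).re := by
  simp only [Complex.normSq_apply, Complex.mul_re, Complex.sub_re, Complex.sub_im,
    Complex.conj_re, Complex.conj_im]
  ring

lemma normSq_one_sub_eq' (a u : ℂ) :
    Complex.normSq (1 - (starRingEnd ℂ) a * u) =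
      1 + Complex.normSq a * Complex.normSq u - 2 * ((starRingEnd ℂ) a * u).re := by
  simp only [Complex.normSq_apply, Complex.mul_re, Complex.mul_im, Complex.sub_re,
    Complex.sub_im, Complex.one_re, Complex.one_im, Complex.conj_re, Complex.conj_im]
  ring

/-- **Lemma.** For a non-constant meromorphic inner function `Θ` (analytic on the closed
upper half-plane) there is `c > 0` such that for all `z` with `Im z > 1` and all
unimodular `γ` one has `|γ + Θ(z)| ≥ 1 − |Θ(z)| ≥ c·Im z/(|z|² + 1)`. -/
theorem inner_function_lower_estimate
    (Θ : ℂ → ℂ)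
    (hmero : MeromorphicOn Θ Set.univ)
    -- Θ is analytic on the closed upper half-plane
    (hanalytic : ∀ z : ℂ, 0 ≤ z.im → AnalyticAt ℂ Θ z)
    -- |Θ| ≤ 1 on the closed upper half-plane and |Θ| = 1 on ℝ
    (hle : ∀ z : ℂ, 0 ≤ z.im → ‖Θ z‖ ≤ 1)
    (hmod : ∀ x : ℝ, ‖Θ (x : ℂ)‖ = 1)
    -- Θ is non-constant
    (hnc : ¬ ∃ c : ℂ, ∀ z : ℂ, 0 ≤ z.im → Θ z = c) :
    ∃ c > (0:ℝ), ∀ z : ℂ, 1 < z.im → ∀ γ : ℂ, ‖γ‖ = 1 →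
      1 - ‖Θ z‖ ≤ ‖γ + Θ z‖ ∧
      c * z.im / (‖z‖ ^ 2 + 1) ≤ 1 - ‖Θ z‖ := by
  classical
  set U : Set ℂ := {z : ℂ | 0 < z.im} with hUdef
  have hUo : IsOpen U := isOpen_lt continuous_const Complex.continuous_im
  have hUconv : Convex ℝ U := convex_halfSpace_im_gt 0
  have hclU : closure U = {z : ℂ | 0 ≤ z.im} := Complex.closure_setOf_lt_im 0
  have hdiffU : DifferentiableOn ℂ Θ U := fun w hw =>
    ((hanalytic w (le_of_lt hw)).differentiableAt).differentiableWithinAt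
  have hcont : ContinuousOn Θ (closure U) := by
    rw [hclU]; exact fun w hw => ((hanalytic w hw).continuousAt).continuousWithinAt
  -- strict inequality on the open upper half-plane
  have hlt : ∀ z : ℂ, 0 < z.im → ‖Θ z‖ < 1 := by
    intro z hz
    rcases lt_or_eq_of_le (hle z hz.le) with h | h
    · exact h
    exfalso
    refine hnc ⟨Θ z, fun w hw => ?_⟩
    have hmax : IsMaxOn (norm ∘ Θ) U z := by
      intro y hy
      show ‖Θ y‖ ≤ ‖Θ z‖
      rw [h]; exact hle y (le_of_lt hy)
    have heq := Complex.eqOn_closure_of_isPreconnected_of_isMaxOn_norm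
      hUconv.isPreconnected hUo ⟨hdiffU, hcont⟩ hz hmax
    have := heq (by rw [hclU]; exact hw)
    simpa using this
  -- base point value
  set a : ℂ := Θ I with ha_def
  have ha : ‖a‖ < 1 := hlt I (by simp)
  have ha0 : 0 ≤ ‖a‖ := norm_nonneg _
  refine ⟨(1 - ‖a‖) / 2, by linarith, ?_⟩
  -- the Möbius transform from the disk to the half-plane
  set T : ℂ → ℂ := fun w => I * (1 + w) / (1 - w) with hT_def
  have hT0 : T 0 = I := by simp [hT_def]
  have hone_sub : ∀ w : ℂ, ‖w‖ < 1 → (1 : ℂ) - w ≠ 0 := by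
    intro w hw h
    rw [sub_eq_zero] at h
    rw [← h] at hw
    simp at hw
  have hTim : ∀ w : ℂ, ‖w‖ < 1 → 0 < (T w).im := by
    intro w hw
    have h1 : (1 : ℂ) - w ≠ 0 := hone_sub w hw
    have hns : 0 < Complex.normSq (1 - w) := Complex.normSq_pos.mpr h1
    have hw2 : Complex.normSq w < 1 := by
      rw [Complex.normSq_eq_norm_sq]
      calc ‖w‖ ^ 2 ≤ ‖w‖ * 1 := by nlinarith [norm_nonneg w]
        _ < 1 := by nlinarith [norm_nonneg w]
    have hw2' : w.re * w.re + w.im * w.im < 1 := by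
      simpa [Complex.normSq_apply] using hw2
    have him : (T w).im =
        ((1 + w.re) * (1 - w.re) - w.im * w.im) / Complex.normSq (1 - w) := by
      simp only [hT_def, Complex.div_im, Complex.mul_re, Complex.mul_im,
        Complex.add_re, Complex.add_im, Complex.one_re, Complex.one_im,
        Complex.I_re, Complex.I_im, Complex.sub_re, Complex.sub_im]
      rw [div_sub_div_same]
      ring_nf
    rw [him]
    apply div_pos _ hns
    nlinarith
  -- the Blaschke-type factor composed with T
  set g : ℂ → ℂ := fun w => (Θ (T w) - a) / (1 - (starRingEnd ℂ) a * Θ (T w)) with hg_def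
  have hden : ∀ u : ℂ, ‖u‖ ≤ 1 → (1 : ℂ) - (starRingEnd ℂ) a * u ≠ 0 := by
    intro u hu h
    rw [sub_eq_zero] at h
    have : ‖(starRingEnd ℂ) a * u‖ < 1 := by
      rw [norm_mul, RCLike.norm_conj]
      nlinarith [norm_nonneg u, norm_nonneg a]
    rw [← h] at this
    simp at this
  -- g is differentiable on the unit ball
  have hgdiff : DifferentiableOn ℂ g (ball (0:ℂ) 1) := by
    intro w hw
    rw [mem_ball_zero_iff] at hw
    have h1 : (1 : ℂ) - w ≠ 0 := hone_sub w hw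
    have hTdiff : DifferentiableAt ℂ T w := by
      apply DifferentiableAt.div
      · exact (differentiable_const _).differentiableAt.mul
          ((differentiable_const _).add differentiable_id).differentiableAt
      · exact ((differentiable_const _).sub differentiable_id).differentiableAt
      · exact h1
    have hΘdiff : DifferentiableAt ℂ Θ (T w) :=
      (hanalytic (T w) (hTim w hw).le).differentiableAt
    have hcomp : DifferentiableAt ℂ (fun w => Θ (T w)) w := hΘdiff.comp w hTdiff
    apply DifferentiableAt.differentiableWithinAt
    apply DifferentiableAt.div
    · exact hcomp.sub_const a
    · exact (differentiable_const _).differentiableAt.sub ((differentiable_const _).differentiableAt.mul hcomp)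
    · exact hden _ (hle _ (hTim w hw).le)
  -- g maps the unit ball to itself
  have hgmaps : MapsTo g (ball (0:ℂ) 1) (ball (0:ℂ) 1) := by
    intro w hw
    rw [mem_ball_zero_iff] at hw ⊢
    have hu : ‖Θ (T w)‖ < 1 := hlt _ (hTim w hw)
    set u : ℂ := Θ (T w) with hu_def
    have hd : (1 : ℂ) - (starRingEnd ℂ) a * u ≠ 0 := hden u hu.le
    have hkey : Complex.normSq (u - a) < Complex.normSq (1 - (starRingEnd ℂ) a * u) := by
      rw [normSq_sub_eq', normSq_one_sub_eq']
      have h1 : Complex.normSq a < 1 := by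
        rw [Complex.normSq_eq_norm_sq]; nlinarith
      have h2 : Complex.normSq u < 1 := by
        rw [Complex.normSq_eq_norm_sq]; nlinarith [norm_nonneg u]
      nlinarith [Complex.normSq_nonneg a, Complex.normSq_nonneg u]
    have := Real.sqrt_lt_sqrt (Complex.normSq_nonneg _) hkey
    rw [← Complex.norm_def, ← Complex.norm_def] at this
    rw [hg_def]
    simp only [norm_div]
    rw [div_lt_one (norm_pos_iff.mpr hd)]
    exact this
  have hg0 : g 0 = 0 := by
    simp [hg_def, hT0, ← ha_def]
  -- main estimate
  intro z hz γ hγ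
  have him0 : (0:ℝ) < z.im := by linarith
  constructor
  · have h := norm_sub_norm_le γ (-Θ z)
    simpa [hγ, sub_neg_eq_add] using h
  -- set up notations
  have hzI : z + I ≠ 0 := by
    intro h
    have : (z + I).im = 0 := by rw [h]; simp
    simp only [Complex.add_im, Complex.I_im] at this
    linarith
  set w : ℂ := (z - I) / (z + I) with hw_def
  set A : ℝ := ‖z + I‖ with hA_def
  set B : ℝ := ‖z - I‖ with hB_def
  have hApos : 0 < A := by
    rw [hA_def, norm_pos_iff]; exact hzI
  have hB0 : 0 ≤ B := norm_nonneg _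
  have hA2 : A ^ 2 = z.re ^ 2 + (z.im + 1) ^ 2 := by
    rw [hA_def, Complex.sq_norm, Complex.normSq_apply]
    simp only [Complex.add_re, Complex.add_im, Complex.I_re, Complex.I_im]
    ring
  have hB2 : B ^ 2 = z.re ^ 2 + (z.im - 1) ^ 2 := by
    rw [hB_def, Complex.sq_norm, Complex.normSq_apply]
    simp only [Complex.sub_re, Complex.sub_im, Complex.I_re, Complex.I_im]
    ring
  have hN2 : ‖z‖ ^ 2 = z.re ^ 2 + z.im ^ 2 := by
    rw [Complex.sq_norm, Complex.normSq_apply]; ring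
  have hBA : B < A := by nlinarith only [hA2, hB2, hz, hB0, hApos]
  have hw1 : ‖w‖ < 1 := by
    rw [hw_def, norm_div, ← hA_def, ← hB_def, div_lt_one hApos]
    exact hBA
  set r : ℝ := ‖w‖ with hr_def
  have hr0 : 0 ≤ r := norm_nonneg _
  -- T w = z
  have hTw : T w = z := by
    have h1 : (1 : ℂ) - w ≠ 0 := hone_sub w hw1
    rw [hT_def]
    show I * (1 + w) / (1 - w) = z
    rw [hw_def] at h1 ⊢
    field_simp
    ring
  -- Schwarz lemma
  have hSchwarz : ‖g w‖ ≤ ‖w‖ :=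
    Complex.norm_le_norm_of_mapsTo_ball hgdiff (hgmaps.mono_right ball_subset_closedBall) hg0
      hw1
  set u : ℂ := Θ z with hu_def
  have hu1 : ‖u‖ < 1 := hlt z him0
  have hu0 : 0 ≤ ‖u‖ := norm_nonneg _
  have hdz : (1 : ℂ) - (starRingEnd ℂ) a * u ≠ 0 := hden u hu1.le
  -- step A: ‖u - a‖ ≤ r * ‖1 - conj a * u‖
  have hstepA : ‖u - a‖ ≤ r * ‖1 - (starRingEnd ℂ) a * u‖ := by
    have : ‖g w‖ = ‖u - a‖ / ‖1 - (starRingEnd ℂ) a * u‖ := by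
      rw [hg_def]
      show ‖((Θ (T w) - a) / (1 - (starRingEnd ℂ) a * Θ (T w)))‖ = _
      rw [hTw, ← hu_def, norm_div]
    rw [this, div_le_iff₀ (norm_pos_iff.mpr hdz)] at hSchwarz
    calc ‖u - a‖ ≤ ‖w‖ * ‖1 - (starRingEnd ℂ) a * u‖ := hSchwarz
      _ = r * ‖1 - (starRingEnd ℂ) a * u‖ := by
          rw [hr_def]
  -- step B: t - s ≤ r * (1 - s * t)
  have hre : ((starRingEnd ℂ) a * u).re ≤ ‖a‖ * ‖u‖ := by
    calc ((starRingEnd ℂ) a * u).re ≤ ‖(starRingEnd ℂ) a * u‖ :=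
        Complex.re_le_norm _
      _ = ‖a‖ * ‖u‖ := by rw [norm_mul, Complex.norm_conj]
  have hsqA : Complex.normSq (u - a) ≤ r ^ 2 * Complex.normSq (1 - (starRingEnd ℂ) a * u) := by
    have e1 : Complex.normSq (u - a) = ‖u - a‖ ^ 2 := by
      rw [Complex.normSq_eq_norm_sq]
    have e2 : Complex.normSq (1 - (starRingEnd ℂ) a * u)
        = ‖1 - (starRingEnd ℂ) a * u‖ ^ 2 := by
      rw [Complex.normSq_eq_norm_sq]
    have h2 := mul_le_mul hstepA hstepA (norm_nonneg _)
      (mul_nonneg hr0 (norm_nonneg _))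
    rw [e1, e2]
    nlinarith [h2]
  have hnsa : Complex.normSq a = ‖a‖ ^ 2 := by
    rw [Complex.normSq_eq_norm_sq]
  have hnsu : Complex.normSq u = ‖u‖ ^ 2 := by
    rw [Complex.normSq_eq_norm_sq]
  have hst : ‖a‖ * ‖u‖ ≤ 1 := mul_le_one₀ ha.le hu0 hu1.le
  have hr1 : r ≤ 1 := hw1.le
  have hstepB : ‖u‖ - ‖a‖ ≤ r * (1 - ‖a‖ * ‖u‖) := by
    rw [normSq_sub_eq', normSq_one_sub_eq', hnsa, hnsu] at hsqA
    have h1r2 : (0:ℝ) ≤ 1 - r ^ 2 := by nlinarith only [hr0, hr1]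
    have hprod : (0:ℝ) ≤ (‖a‖ * ‖u‖ - ((starRingEnd ℂ) a * u).re) * (1 - r ^ 2) :=
      mul_nonneg (by linarith only [hre]) h1r2
    have hsq : (‖u‖ - ‖a‖) ^ 2 ≤ (r * (1 - ‖a‖ * ‖u‖)) ^ 2 := by
      nlinarith only [hsqA, hprod]
    have hq0 : (0:ℝ) ≤ r * (1 - ‖a‖ * ‖u‖) :=
      mul_nonneg hr0 (by linarith only [hst])
    nlinarith only [hsq, hq0]
  -- step C: (1-s)(1-r)/2 ≤ 1 - t
  have hstepC : (1 - ‖a‖) * (1 - r) / 2 ≤ 1 - ‖u‖ := by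
    have h1sr : (0:ℝ) ≤ 1 - ‖a‖ * r := by nlinarith only [ha, ha0, hr0, hr1]
    have hint1 : (0:ℝ) ≤ (1 - ‖u‖) * (1 - ‖a‖ * r) :=
      mul_nonneg (by linarith only [hu1]) h1sr
    nlinarith only [hstepB, hint1]
  -- step D: z.im / (‖z‖² + 1) ≤ 1 - r
  have hD : (0:ℝ) < ‖z‖ ^ 2 + 1 := by positivity
  have hstepD : z.im / (‖z‖ ^ 2 + 1) ≤ 1 - r := by
    have hr_eq : r = B / A := by
      rw [hr_def, hw_def, norm_div, ← hA_def, ← hB_def]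
    have h4 : (A - B) * (A + B) = 4 * z.im := by linear_combination hA2 - hB2
    have hA2D : A ^ 2 ≤ 2 * (‖z‖ ^ 2 + 1) := by
      nlinarith only [hA2, hN2, sq_nonneg (z.im - 1)]
    have h5 : z.im * A * (A + B) ≤ (A - B) * (‖z‖ ^ 2 + 1) * (A + B) := by
      have heq : (A - B) * (‖z‖ ^ 2 + 1) * (A + B) = 4 * z.im * (‖z‖ ^ 2 + 1) := by
        linear_combination (‖z‖ ^ 2 + 1) * h4
      rw [heq]
      have hintA : (0:ℝ) ≤ z.im * A * (A - B) :=
        mul_nonneg (mul_nonneg him0.le hApos.le) (by linarith only [hBA])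
      have hintB : (0:ℝ) ≤ z.im * (2 * (‖z‖ ^ 2 + 1) - A ^ 2) :=
        mul_nonneg him0.le (by linarith only [hA2D])
      nlinarith only [hintA, hintB]
    have h6 : z.im * A ≤ (A - B) * (‖z‖ ^ 2 + 1) :=
      le_of_mul_le_mul_right h5 (by linarith)
    have h7 : 1 - r = (A - B) / A := by
      rw [hr_eq]; field_simp
    rw [h7, div_le_div_iff₀ hD hApos]
    linarith
  -- combine
  calc (1 - ‖a‖) / 2 * z.im / (‖z‖ ^ 2 + 1)
      = (1 - ‖a‖) / 2 * (z.im / (‖z‖ ^ 2 + 1)) := by ring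
    _ ≤ (1 - ‖a‖) / 2 * (1 - r) := by
        apply mul_le_mul_of_nonneg_left hstepD (by linarith)
    _ = (1 - ‖a‖) * (1 - r) / 2 := by ring
    _ ≤ 1 - ‖u‖ := hstepC

end
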